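/- arXiv:2412.10837 — 2 statements merged into one kernel-verified Lean document; each statement's English description precedes it below -/
import Mathlib

section
/- The composition of set partition diagrams is associative: for set partitions π₁ of [l+k], π₂ of [m+l] and π₃ of [q+m], one has (π₃∘π₂)∘π₁ = π₃∘(π₂∘π₁) as set partitions of [q+k], and the removed-component counts satisfy c(π₃,π₂) + c(π₃∘π₂, π₁) = c(π₂,π₁) + c(π₃, π₂∘π₁). -/
open Classical
noncomputable section

/-- Map from the disjoint union `A ⊔ B ⊔ C` (with `A = [m]`, `B = [l]`, `C = [k]`) to the
vertex set `[m+l]` of the upper diagram `π₂`. -/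
def toUpper (m l k : ℕ) : Fin m ⊕ (Fin l ⊕ Fin k) → Option (Fin (m + l))
  | Sum.inl a => some (Fin.castAdd l a)
  | Sum.inr (Sum.inl b) => some (Fin.natAdd m b)
  | Sum.inr (Sum.inr _) => none

/-- Map from `A ⊔ B ⊔ C` to the vertex set `[l+k]` of the lower diagram `π₁`. -/
def toLower (m l k : ℕ) : Fin m ⊕ (Fin l ⊕ Fin k) → Option (Fin (l + k))
  | Sum.inl _ => none
  | Sum.inr (Sum.inl b) => some (Fin.castAdd k b)
  | Sum.inr (Sum.inr c) => some (Fin.natAdd l c)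

/-- The relation on `A ⊔ B ⊔ C` induced by `π₂` (on `A ⊔ B`) and `π₁` (on `B ⊔ C`);
the concatenated relation `∼` is its equivalence closure. -/
def glue (m l k : ℕ) (π₂ : Setoid (Fin (m + l))) (π₁ : Setoid (Fin (l + k)))
    (x y : Fin m ⊕ (Fin l ⊕ Fin k)) : Prop :=
  (∃ a b, toUpper m l k x = some a ∧ toUpper m l k y = some b ∧ π₂.r a b) ∨
  (∃ a b, toLower m l k x = some a ∧ toLower m l k y = some b ∧ π₁.r a b)

/-- The inclusion of the outer vertex set `[m+k]` into `A ⊔ B ⊔ C`. -/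
def embMK (m l k : ℕ) (x : Fin (m + k)) : Fin m ⊕ (Fin l ⊕ Fin k) :=
  Fin.addCases (motive := fun _ => Fin m ⊕ (Fin l ⊕ Fin k))
    (fun a => Sum.inl a) (fun c => Sum.inr (Sum.inr c)) x

/-- The composition `π₂ ∘ π₁` of set partition diagrams: the set partition of `[m+k]`
induced by the equivalence closure of `glue` on `A ⊔ C`. -/
def compSetoid (m l k : ℕ) (π₂ : Setoid (Fin (m + l))) (π₁ : Setoid (Fin (l + k))) :
    Setoid (Fin (m + k)) :=
  Setoid.comap (embMK m l k) (Relation.EqvGen.setoid (glue m l k π₂ π₁))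

/-- `c(π₂, π₁)`: the number of `∼`-equivalence classes contained entirely in the
middle row `B`. -/
def removedCount (m l k : ℕ) (π₂ : Setoid (Fin (m + l))) (π₁ : Setoid (Fin (l + k))) : ℕ :=
  Nat.card {q : Quotient (Relation.EqvGen.setoid (glue m l k π₂ π₁)) //
    ∀ x, Quotient.mk (Relation.EqvGen.setoid (glue m l k π₂ π₁)) x = q →
      ∃ b : Fin l, x = Sum.inr (Sum.inl b)}


open Classical Relation
noncomputable section

namespace SPAssoc

/-! ### Generic lemmas about equivalence closures -/

theorem eqvGen_map {α β : Type} {r : α → α → Prop} {r' : β → β → Prop} (f : α → β)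
    (h : ∀ a b, r a b → EqvGen r' (f a) (f b)) :
    ∀ {a b}, EqvGen r a b → EqvGen r' (f a) (f b) := by
  intro a b hab
  induction hab with
  | rel a b h' => exact h a b h'
  | refl a => exact EqvGen.refl _
  | symm a b _ ih => exact EqvGen.symm _ _ ih
  | trans a b c _ _ ih1 ih2 => exact EqvGen.trans _ _ _ ih1 ih2

section Generic

variable {W Vin Vout Mid OMid P : Type}
variable (RW : W → W → Prop) (Gin : Vin → Vin → Prop) (Gout : Vout → Vout → Prop)
variable (jin : Vin → W) (iout : Vout → W)
variable (inMid : Mid → Vin) (pIn : P → Vin) (pOut : P → Vout) (nu : OMid → Vout)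
variable (split : W → Mid ⊕ Vout) (splitIn : Vin → Mid ⊕ P)

/-- The strengthened invariant used to analyse chains in the big space `W`. -/
def Phi : (Mid ⊕ Vout) → (Mid ⊕ Vout) → Prop
  | Sum.inr x, Sum.inr y => EqvGen Gout x y
  | Sum.inl u, Sum.inr y => ∃ p, EqvGen Gin (inMid u) (pIn p) ∧ EqvGen Gout (pOut p) y
  | Sum.inr x, Sum.inl u => ∃ p, EqvGen Gout x (pOut p) ∧ EqvGen Gin (pIn p) (inMid u)
  | Sum.inl u, Sum.inl u' => EqvGen Gin (inMid u) (inMid u') ∨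
      ∃ p p', EqvGen Gin (inMid u) (pIn p) ∧ EqvGen Gout (pOut p) (pOut p') ∧
        EqvGen Gin (pIn p') (inMid u')

variable {RW Gin Gout jin iout inMid pIn pOut nu split splitIn}

section PhiLemmas

variable (hbridge : ∀ p p', EqvGen Gin (pIn p) (pIn p') → Gout (pOut p) (pOut p'))
include hbridge

theorem tout_of_ein (p p' : P) (h : EqvGen Gin (pIn p) (pIn p')) :
    EqvGen Gout (pOut p) (pOut p') :=
  EqvGen.rel _ _ (hbridge p p' h)

omit hbridge in
theorem phi_refl (z : Mid ⊕ Vout) : Phi Gin Gout inMid pIn pOut z z := by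
  cases z with
  | inl u => exact Or.inl (EqvGen.refl _)
  | inr x => exact EqvGen.refl _

omit hbridge in
theorem phi_symm {z z' : Mid ⊕ Vout} (h : Phi Gin Gout inMid pIn pOut z z') :
    Phi Gin Gout inMid pIn pOut z' z := by
  cases z with
  | inl u =>
    cases z' with
    | inl u' =>
      rcases h with h | ⟨p, p', h1, h2, h3⟩
      · exact Or.inl (EqvGen.symm _ _ h)
      · exact Or.inr ⟨p', p, EqvGen.symm _ _ h3, EqvGen.symm _ _ h2, EqvGen.symm _ _ h1⟩
    | inr y =>
      rcases h with ⟨p, h1, h2⟩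
      exact ⟨p, EqvGen.symm _ _ h2, EqvGen.symm _ _ h1⟩
  | inr x =>
    cases z' with
    | inl u' =>
      rcases h with ⟨p, h1, h2⟩
      exact ⟨p, EqvGen.symm _ _ h2, EqvGen.symm _ _ h1⟩
    | inr y => exact EqvGen.symm _ _ h

theorem phi_trans {z₁ z₂ z₃ : Mid ⊕ Vout} (h12 : Phi Gin Gout inMid pIn pOut z₁ z₂)
    (h23 : Phi Gin Gout inMid pIn pOut z₂ z₃) : Phi Gin Gout inMid pIn pOut z₁ z₃ := by
  cases z₂ with
  | inr y =>
    cases z₁ with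
    | inr x =>
      cases z₃ with
      | inr z => exact EqvGen.trans _ _ _ h12 h23
      | inl u =>
        rcases h23 with ⟨p, h1, h2⟩
        exact ⟨p, EqvGen.trans _ _ _ h12 h1, h2⟩
    | inl u =>
      rcases h12 with ⟨p, h1, h2⟩
      cases z₃ with
      | inr z => exact ⟨p, h1, EqvGen.trans _ _ _ h2 h23⟩
      | inl u' =>
        rcases h23 with ⟨p', h3, h4⟩
        exact Or.inr ⟨p, p', h1, EqvGen.trans _ _ _ h2 h3, h4⟩
  | inl v =>
    cases z₁ with
    | inr x =>
      rcases h12 with ⟨p, h1, h2⟩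
      cases z₃ with
      | inr z =>
        rcases h23 with ⟨p', h3, h4⟩
        exact EqvGen.trans _ _ _ h1 (EqvGen.trans _ _ _
          (tout_of_ein hbridge p p' (EqvGen.trans _ _ _ h2 h3)) h4)
      | inl u' =>
        rcases h23 with h | ⟨p₁, p₂, h3, h4, h5⟩
        · exact ⟨p, h1, EqvGen.trans _ _ _ h2 h⟩
        · exact ⟨p₂, EqvGen.trans _ _ _ h1 (EqvGen.trans _ _ _
            (tout_of_ein hbridge p p₁ (EqvGen.trans _ _ _ h2 h3)) h4), h5⟩
    | inl u =>
      cases z₃ with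
      | inr z =>
        rcases h23 with ⟨p', h3, h4⟩
        rcases h12 with h | ⟨p₁, p₂, h5, h6, h7⟩
        · exact ⟨p', EqvGen.trans _ _ _ h h3, h4⟩
        · exact ⟨p₁, h5, EqvGen.trans _ _ _ h6 (EqvGen.trans _ _ _
            (tout_of_ein hbridge p₂ p' (EqvGen.trans _ _ _ h7 h3)) h4)⟩
      | inl u' =>
        rcases h12 with h | ⟨p₁, p₂, h5, h6, h7⟩
        · rcases h23 with h' | ⟨p₃, p₄, h8, h9, h10⟩
          · exact Or.inl (EqvGen.trans _ _ _ h h')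
          · exact Or.inr ⟨p₃, p₄, EqvGen.trans _ _ _ h h8, h9, h10⟩
        · rcases h23 with h' | ⟨p₃, p₄, h8, h9, h10⟩
          · exact Or.inr ⟨p₁, p₂, h5, h6, EqvGen.trans _ _ _ h7 h'⟩
          · exact Or.inr ⟨p₁, p₄, h5, EqvGen.trans _ _ _ h6 (EqvGen.trans _ _ _
              (tout_of_ein hbridge p₂ p₃ (EqvGen.trans _ _ _ h7 h8)) h9), h10⟩

variable (hRW_phi : ∀ w w', RW w w' → Phi Gin Gout inMid pIn pOut (split w) (split w'))
include hRW_phi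

theorem phi_of_eqvGen {w w' : W} (h : EqvGen RW w w') :
    Phi Gin Gout inMid pIn pOut (split w) (split w') := by
  induction h with
  | rel a b h' => exact hRW_phi a b h'
  | refl a => exact phi_refl (Gin := Gin) (Gout := Gout) (inMid := inMid) (pIn := pIn) (pOut := pOut) _
  | symm a b _ ih => exact phi_symm (Gin := Gin) ih
  | trans a b c _ _ ih1 ih2 => exact phi_trans hbridge ih1 ih2

end PhiLemmas


section Restrict

variable (hgen_in : ∀ x y, Gin x y → RW (jin x) (jin y))
variable (hgen_out : ∀ x y, Gout x y → EqvGen RW (iout x) (iout y))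
variable (hbridge : ∀ p p', EqvGen Gin (pIn p) (pIn p') → Gout (pOut p) (pOut p'))
variable (hRW_phi : ∀ w w', RW w w' → Phi Gin Gout inMid pIn pOut (split w) (split w'))
variable (hsplit : ∀ w, Sum.elim (fun u => jin (inMid u)) iout (split w) = w)
variable (hsplit_mu : ∀ u, split (jin (inMid u)) = Sum.inl u)
variable (hsplit_out : ∀ x, split (iout x) = Sum.inr x)
variable (hsplitIn_mid : ∀ u, splitIn (inMid u) = Sum.inl u)
variable (hsplitIn_p : ∀ p, splitIn (pIn p) = Sum.inr p)
variable (hj_inj : Function.Injective jin)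
variable (hi_inj : Function.Injective iout)

omit hgen_in hgen_out hsplit hsplit_mu hsplit_out hsplitIn_mid hsplitIn_p hj_inj hi_inj

include hgen_in in
theorem eqvGen_jin {x y : Vin} (h : EqvGen Gin x y) : EqvGen RW (jin x) (jin y) :=
  eqvGen_map jin (fun a b h' => EqvGen.rel _ _ (hgen_in a b h')) h

include hgen_out in
theorem eqvGen_iout {x y : Vout} (h : EqvGen Gout x y) : EqvGen RW (iout x) (iout y) :=
  eqvGen_map iout hgen_out h

include hsplitIn_mid hsplitIn_p in
theorem pIn_ne_inMid (p : P) (u : Mid) : pIn p ≠ inMid u := by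
  intro h
  have := congrArg splitIn h
  rw [hsplitIn_p, hsplitIn_mid] at this
  exact nomatch this

include hsplit_mu hsplit_out in
theorem mu_ne_iout (u : Mid) (x : Vout) : jin (inMid u) ≠ iout x := by
  intro h
  have := congrArg split h
  rw [hsplit_mu, hsplit_out] at this
  exact nomatch this

include hbridge hRW_phi hgen_out hsplit_out in
theorem eqvGen_iout_iff {x y : Vout} :
    EqvGen RW (iout x) (iout y) ↔ EqvGen Gout x y := by
  constructor
  · intro h
    have := phi_of_eqvGen hbridge hRW_phi h
    rwa [hsplit_out, hsplit_out] at this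
  · exact eqvGen_iout hgen_out

include hbridge hRW_phi hsplit hsplit_mu hsplitIn_mid hsplitIn_p in
/-- If the inner class of `inMid u₀` consists of middle points only, then the big class of
`jin (inMid u₀)` consists of middle points only. -/
theorem allmid_w {u₀ : Mid} (h : ∀ x, EqvGen Gin x (inMid u₀) → ∃ u, x = inMid u) :
    ∀ w, EqvGen RW w (jin (inMid u₀)) → ∃ u, w = jin (inMid u) := by
  intro w hw
  have hphi := phi_of_eqvGen hbridge hRW_phi hw
  rw [hsplit_mu] at hphi
  rcases hs : split w with u | x
  · exact ⟨u, by rw [← hsplit w, hs]; rfl⟩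
  · rw [hs] at hphi
    rcases hphi with ⟨p, _, h2⟩
    rcases h _ h2 with ⟨u, hu⟩
    have := congrArg splitIn hu
    rw [hsplitIn_p, hsplitIn_mid] at this
    exact nomatch this

include hgen_in hj_inj in
theorem allmid_in {u₀ : Mid} (h : ∀ w, EqvGen RW w (jin (inMid u₀)) → ∃ u, w = jin (inMid u)) :
    ∀ x, EqvGen Gin x (inMid u₀) → ∃ u, x = inMid u := by
  intro x hx
  rcases h _ (eqvGen_jin hgen_in hx) with ⟨u, hu⟩
  exact ⟨u, hj_inj hu⟩

include hbridge hRW_phi hsplit_mu hsplitIn_mid hsplitIn_p in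
theorem ein_of_mu_mu {u u₀ : Mid}
    (hmm : EqvGen RW (jin (inMid u)) (jin (inMid u₀)))
    (h : ∀ x, EqvGen Gin x (inMid u₀) → ∃ u', x = inMid u') :
    EqvGen Gin (inMid u) (inMid u₀) := by
  have hphi := phi_of_eqvGen hbridge hRW_phi hmm
  rw [hsplit_mu, hsplit_mu] at hphi
  rcases hphi with h' | ⟨p, p', _, _, h3⟩
  · exact h'
  · rcases h _ h3 with ⟨u', hu'⟩
    have := congrArg splitIn hu'
    rw [hsplitIn_p, hsplitIn_mid] at this
    exact nomatch this

include hbridge hRW_phi hsplit hsplit_mu hsplit_out in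
/-- If the outer class of `nu v₀` consists of outer-middle points only, then the big class of
`iout (nu v₀)` consists of points in the two middle rows only. -/
theorem allnu_w {v₀ : OMid} (h : ∀ x, EqvGen Gout x (nu v₀) → ∃ v, x = nu v) :
    ∀ w, EqvGen RW w (iout (nu v₀)) →
      (∃ u, w = jin (inMid u)) ∨ (∃ v, w = iout (nu v)) := by
  intro w hw
  have hphi := phi_of_eqvGen hbridge hRW_phi hw
  rw [hsplit_out] at hphi
  rcases hs : split w with u | x
  · exact Or.inl ⟨u, by rw [← hsplit w, hs]; rfl⟩
  · rw [hs] at hphi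
    rcases h _ hphi with ⟨v, hv⟩
    exact Or.inr ⟨v, by rw [← hsplit w, hs, hv]; rfl⟩

include hgen_out hbridge hRW_phi hsplit_mu hsplit_out hi_inj in
theorem allnu_out {v₀ : OMid}
    (h : ∀ w, EqvGen RW w (iout (nu v₀)) →
      (∃ u, w = jin (inMid u)) ∨ (∃ v, w = iout (nu v))) :
    ∀ x, EqvGen Gout x (nu v₀) → ∃ v, x = nu v := by
  intro x hx
  rcases h _ (eqvGen_iout hgen_out hx) with ⟨u, hu⟩ | ⟨v, hv⟩
  · have := congrArg split hu
    rw [hsplit_out, hsplit_mu] at this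
    exact nomatch this
  · exact ⟨v, hi_inj hv⟩


include hgen_in hgen_out hbridge hRW_phi hsplit hsplit_mu hsplit_out hsplitIn_mid
  hsplitIn_p hj_inj hi_inj in
theorem card_split [Finite Vin] [Finite Vout] [Finite W] :
    Nat.card {d : Quotient (EqvGen.setoid Gin) //
        ∀ x, Quotient.mk (EqvGen.setoid Gin) x = d → ∃ u, x = inMid u} +
      Nat.card {d : Quotient (EqvGen.setoid Gout) //
        ∀ x, Quotient.mk (EqvGen.setoid Gout) x = d → ∃ v, x = nu v} =
      Nat.card {d : Quotient (EqvGen.setoid RW) //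
        ∀ w, Quotient.mk (EqvGen.setoid RW) w = d →
          (∃ u, w = jin (inMid u)) ∨ (∃ v, w = iout (nu v))} := by
  classical
  set sin := EqvGen.setoid Gin with hsin
  set sout := EqvGen.setoid Gout with hsout
  set sW := EqvGen.setoid RW with hsW
  rw [← Nat.card_sum]
  apply Nat.card_congr
  -- the two lifted maps on quotients
  set FIn : Quotient sin → Quotient sW :=
    Quotient.lift (fun x => Quotient.mk sW (jin x))
      (fun a b h => Quotient.sound (eqvGen_jin hgen_in h)) with hFIn
  set GOut : Quotient sout → Quotient sW :=
    Quotient.lift (fun x => Quotient.mk sW (iout x))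
      (fun a b h => Quotient.sound (eqvGen_iout hgen_out h)) with hGOut
  -- forward map
  refine Equiv.ofBijective (Sum.elim
    (fun a => ⟨FIn a.1, ?_⟩) (fun b => ⟨GOut b.1, ?_⟩)) ⟨?_, ?_⟩
  · -- property for the inner-middle classes
    obtain ⟨x₀, hx₀⟩ := Quotient.exists_rep a.1
    obtain ⟨u₀, rfl⟩ := a.2 x₀ hx₀
    intro w hw
    rw [← hx₀] at hw
    have hw' : EqvGen RW w (jin (inMid u₀)) := Quotient.exact hw
    have hin : ∀ x, EqvGen Gin x (inMid u₀) → ∃ u, x = inMid u := by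
      intro x hx
      exact a.2 x (by rw [← hx₀]; exact Quotient.sound hx)
    rcases allmid_w hbridge hRW_phi hsplit hsplit_mu hsplitIn_mid hsplitIn_p hin w hw'
      with ⟨u, hu⟩
    exact Or.inl ⟨u, hu⟩
  · -- property for the outer-middle classes
    obtain ⟨y₀, hy₀⟩ := Quotient.exists_rep b.1
    obtain ⟨v₀, rfl⟩ := b.2 y₀ hy₀
    intro w hw
    rw [← hy₀] at hw
    have hw' : EqvGen RW w (iout (nu v₀)) := Quotient.exact hw
    have hout : ∀ x, EqvGen Gout x (nu v₀) → ∃ v, x = nu v := by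
      intro x hx
      exact b.2 x (by rw [← hy₀]; exact Quotient.sound hx)
    exact allnu_w hbridge hRW_phi hsplit hsplit_mu hsplit_out hout w hw'
  · -- injectivity
    rintro (⟨da, ha⟩ | ⟨db, hb⟩) (⟨da', ha'⟩ | ⟨db', hb'⟩) hclaim
    · obtain ⟨x₀, hx₀⟩ := Quotient.exists_rep da
      obtain ⟨u₀, rfl⟩ := ha x₀ hx₀
      obtain ⟨x₁, hx₁⟩ := Quotient.exists_rep da'
      obtain ⟨u₁, rfl⟩ := ha' x₁ hx₁
      have h1 : FIn da = FIn da' := by simpa using hclaim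
      rw [← hx₀, ← hx₁] at h1
      have h2 : EqvGen RW (jin (inMid u₀)) (jin (inMid u₁)) := Quotient.exact h1
      have hin : ∀ x, EqvGen Gin x (inMid u₁) → ∃ u', x = inMid u' := by
        intro x hx
        exact ha' x (by rw [← hx₁]; exact Quotient.sound hx)
      have h3 := ein_of_mu_mu hbridge hRW_phi hsplit_mu hsplitIn_mid hsplitIn_p h2 hin
      simp only [Sum.inl.injEq]
      apply Subtype.ext
      show da = da'
      rw [← hx₀, ← hx₁]
      exact Quotient.sound h3
    · exfalso
      obtain ⟨x₀, hx₀⟩ := Quotient.exists_rep da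
      obtain ⟨u₀, rfl⟩ := ha x₀ hx₀
      obtain ⟨y₀, hy₀⟩ := Quotient.exists_rep db'
      obtain ⟨v₀, rfl⟩ := hb' y₀ hy₀
      have h1 : FIn da = GOut db' := by simpa using hclaim
      rw [← hx₀, ← hy₀] at h1
      have h2 : EqvGen RW (jin (inMid u₀)) (iout (nu v₀)) := Quotient.exact h1
      have hphi := phi_of_eqvGen hbridge hRW_phi h2
      rw [hsplit_mu, hsplit_out] at hphi
      rcases hphi with ⟨p, hp1, _⟩
      obtain ⟨u, hu⟩ := ha (pIn p)
        (by rw [← hx₀]; exact Quotient.sound (EqvGen.symm _ _ hp1))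
      have := congrArg splitIn hu
      rw [hsplitIn_p, hsplitIn_mid] at this
      exact nomatch this
    · exfalso
      obtain ⟨y₀, hy₀⟩ := Quotient.exists_rep db
      obtain ⟨v₀, rfl⟩ := hb y₀ hy₀
      obtain ⟨x₁, hx₁⟩ := Quotient.exists_rep da'
      obtain ⟨u₁, rfl⟩ := ha' x₁ hx₁
      have h1 : GOut db = FIn da' := by simpa using hclaim
      rw [← hy₀, ← hx₁] at h1
      have h2 : EqvGen RW (jin (inMid u₁)) (iout (nu v₀)) :=
        EqvGen.symm _ _ (Quotient.exact h1)
      have hphi := phi_of_eqvGen hbridge hRW_phi h2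
      rw [hsplit_mu, hsplit_out] at hphi
      rcases hphi with ⟨p, hp1, _⟩
      obtain ⟨u, hu⟩ := ha' (pIn p)
        (by rw [← hx₁]; exact Quotient.sound (EqvGen.symm _ _ hp1))
      have := congrArg splitIn hu
      rw [hsplitIn_p, hsplitIn_mid] at this
      exact nomatch this
    · obtain ⟨y₀, hy₀⟩ := Quotient.exists_rep db
      obtain ⟨v₀, rfl⟩ := hb y₀ hy₀
      obtain ⟨y₁, hy₁⟩ := Quotient.exists_rep db'
      obtain ⟨v₁, rfl⟩ := hb' y₁ hy₁
      have h1 : GOut db = GOut db' := by simpa using hclaim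
      rw [← hy₀, ← hy₁] at h1
      have h2 : EqvGen RW (iout (nu v₀)) (iout (nu v₁)) := Quotient.exact h1
      have h3 := (eqvGen_iout_iff hgen_out hbridge hRW_phi hsplit_out).1 h2
      simp only [Sum.inr.injEq]
      apply Subtype.ext
      show db = db'
      rw [← hy₀, ← hy₁]
      exact Quotient.sound h3
  · -- surjectivity
    rintro ⟨d, hd⟩
    obtain ⟨w₀, hw₀⟩ := Quotient.exists_rep d
    rcases hd w₀ hw₀ with ⟨u₀, rfl⟩ | ⟨v₀, rfl⟩
    · by_cases hc : ∃ v, EqvGen RW (iout (nu v)) (jin (inMid u₀))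
      · obtain ⟨v, hv⟩ := hc
        refine ⟨Sum.inr ⟨Quotient.mk sout (nu v), ?_⟩, ?_⟩
        · intro x hx
          have hx' : EqvGen Gout x (nu v) := Quotient.exact hx
          have h2 : EqvGen RW (iout x) (jin (inMid u₀)) :=
            EqvGen.trans _ _ _ (eqvGen_iout hgen_out hx') hv
          rcases hd (iout x) (by rw [← hw₀]; exact Quotient.sound h2) with ⟨u, hu⟩ | ⟨v', hv'⟩
          · exfalso
            have := congrArg split hu
            rw [hsplit_out, hsplit_mu] at this
            exact nomatch this
          · exact ⟨v', hi_inj hv'⟩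
        · apply Subtype.ext
          show GOut (Quotient.mk sout (nu v)) = d
          rw [← hw₀]
          exact Quotient.sound hv
      · refine ⟨Sum.inl ⟨Quotient.mk sin (inMid u₀), ?_⟩, ?_⟩
        · intro x hx
          have hx' : EqvGen Gin x (inMid u₀) := Quotient.exact hx
          have h2 : EqvGen RW (jin x) (jin (inMid u₀)) := eqvGen_jin hgen_in hx'
          rcases hd (jin x) (by rw [← hw₀]; exact Quotient.sound h2) with ⟨u, hu⟩ | ⟨v', hv'⟩
          · exact ⟨u, hj_inj hu⟩
          · exfalso
            exact hc ⟨v', by rw [← hv']; exact h2⟩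
        · apply Subtype.ext
          show FIn (Quotient.mk sin (inMid u₀)) = d
          rw [← hw₀]; rfl
    · refine ⟨Sum.inr ⟨Quotient.mk sout (nu v₀), ?_⟩, ?_⟩
      · intro x hx
        have hx' : EqvGen Gout x (nu v₀) := Quotient.exact hx
        have h2 : EqvGen RW (iout x) (iout (nu v₀)) := eqvGen_iout hgen_out hx'
        rcases hd (iout x) (by rw [← hw₀]; exact Quotient.sound h2) with ⟨u, hu⟩ | ⟨v', hv'⟩
        · exfalso
          have := congrArg split hu
          rw [hsplit_out, hsplit_mu] at this
          exact nomatch this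
        · exact ⟨v', hi_inj hv'⟩
      · apply Subtype.ext
        show GOut (Quotient.mk sout (nu v₀)) = d
        rw [← hw₀]; rfl

end Restrict


end Generic

end SPAssoc

namespace SPAssoc

section Inst

variable {k l m q : ℕ}

/-- Projection of the four-row space onto the `[q+m]` vertex set of `π₃`. -/
def toQM : Fin q ⊕ (Fin m ⊕ (Fin l ⊕ Fin k)) → Option (Fin (q + m))
  | Sum.inl a => some (Fin.castAdd m a)
  | Sum.inr (Sum.inl u) => some (Fin.natAdd q u)
  | Sum.inr (Sum.inr _) => none

/-- Projection of the four-row space onto the `[m+l]` vertex set of `π₂`. -/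
def toML : Fin q ⊕ (Fin m ⊕ (Fin l ⊕ Fin k)) → Option (Fin (m + l))
  | Sum.inl _ => none
  | Sum.inr (Sum.inl u) => some (Fin.castAdd l u)
  | Sum.inr (Sum.inr (Sum.inl b)) => some (Fin.natAdd m b)
  | Sum.inr (Sum.inr (Sum.inr _)) => none

/-- Projection of the four-row space onto the `[l+k]` vertex set of `π₁`. -/
def toLK : Fin q ⊕ (Fin m ⊕ (Fin l ⊕ Fin k)) → Option (Fin (l + k))
  | Sum.inl _ => none
  | Sum.inr (Sum.inl _) => none
  | Sum.inr (Sum.inr (Sum.inl b)) => some (Fin.castAdd k b)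
  | Sum.inr (Sum.inr (Sum.inr c)) => some (Fin.natAdd l c)

variable (π₁ : Setoid (Fin (l + k))) (π₂ : Setoid (Fin (m + l))) (π₃ : Setoid (Fin (q + m)))

/-- The relation on the four-row space generated by all three set partitions. -/
def bigR (w w' : Fin q ⊕ (Fin m ⊕ (Fin l ⊕ Fin k))) : Prop :=
  (∃ a b, toQM w = some a ∧ toQM w' = some b ∧ π₃.r a b) ∨
  (∃ a b, toML w = some a ∧ toML w' = some b ∧ π₂.r a b) ∨
  (∃ a b, toLK w = some a ∧ toLK w' = some b ∧ π₁.r a b)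

variable {π₁ π₂ π₃}

/-- Inclusion of rows `Q, M, L` into the four-row space. -/
def jQML : Fin q ⊕ (Fin m ⊕ Fin l) → Fin q ⊕ (Fin m ⊕ (Fin l ⊕ Fin k))
  | Sum.inl a => Sum.inl a
  | Sum.inr (Sum.inl u) => Sum.inr (Sum.inl u)
  | Sum.inr (Sum.inr b) => Sum.inr (Sum.inr (Sum.inl b))

/-- Inclusion of rows `Q, L, K` into the four-row space. -/
def iQLK : Fin q ⊕ (Fin l ⊕ Fin k) → Fin q ⊕ (Fin m ⊕ (Fin l ⊕ Fin k))
  | Sum.inl a => Sum.inl a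
  | Sum.inr (Sum.inl b) => Sum.inr (Sum.inr (Sum.inl b))
  | Sum.inr (Sum.inr c) => Sum.inr (Sum.inr (Sum.inr c))

/-- Inclusion of rows `M, L, K` into the four-row space. -/
def jMLK : Fin m ⊕ (Fin l ⊕ Fin k) → Fin q ⊕ (Fin m ⊕ (Fin l ⊕ Fin k))
  | Sum.inl u => Sum.inr (Sum.inl u)
  | Sum.inr (Sum.inl b) => Sum.inr (Sum.inr (Sum.inl b))
  | Sum.inr (Sum.inr c) => Sum.inr (Sum.inr (Sum.inr c))

/-- Inclusion of rows `Q, M, K` into the four-row space. -/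
def iQMK : Fin q ⊕ (Fin m ⊕ Fin k) → Fin q ⊕ (Fin m ⊕ (Fin l ⊕ Fin k))
  | Sum.inl a => Sum.inl a
  | Sum.inr (Sum.inl u) => Sum.inr (Sum.inl u)
  | Sum.inr (Sum.inr c) => Sum.inr (Sum.inr (Sum.inr c))

/-- Inclusion of rows `Q, L` into rows `Q, M, L`. -/
def qlIn : Fin q ⊕ Fin l → Fin q ⊕ (Fin m ⊕ Fin l)
  | Sum.inl a => Sum.inl a
  | Sum.inr b => Sum.inr (Sum.inr b)

/-- Inclusion of rows `Q, L` into rows `Q, L, K`. -/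
def qlOut : Fin q ⊕ Fin l → Fin q ⊕ (Fin l ⊕ Fin k)
  | Sum.inl a => Sum.inl a
  | Sum.inr b => Sum.inr (Sum.inl b)

/-- Inclusion of rows `M, K` into rows `M, L, K`. -/
def mkIn : Fin m ⊕ Fin k → Fin m ⊕ (Fin l ⊕ Fin k)
  | Sum.inl u => Sum.inl u
  | Sum.inr c => Sum.inr (Sum.inr c)

/-- Inclusion of rows `M, K` into rows `Q, M, K`. -/
def mkOut : Fin m ⊕ Fin k → Fin q ⊕ (Fin m ⊕ Fin k)
  | Sum.inl u => Sum.inr (Sum.inl u)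
  | Sum.inr c => Sum.inr (Sum.inr c)

/-- Splitting the four-row space as row `M` together with rows `Q, L, K`. -/
def splitM : Fin q ⊕ (Fin m ⊕ (Fin l ⊕ Fin k)) → Fin m ⊕ (Fin q ⊕ (Fin l ⊕ Fin k))
  | Sum.inl a => Sum.inr (Sum.inl a)
  | Sum.inr (Sum.inl u) => Sum.inl u
  | Sum.inr (Sum.inr (Sum.inl b)) => Sum.inr (Sum.inr (Sum.inl b))
  | Sum.inr (Sum.inr (Sum.inr c)) => Sum.inr (Sum.inr (Sum.inr c))

/-- Splitting the four-row space as row `L` together with rows `Q, M, K`. -/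
def splitL : Fin q ⊕ (Fin m ⊕ (Fin l ⊕ Fin k)) → Fin l ⊕ (Fin q ⊕ (Fin m ⊕ Fin k))
  | Sum.inl a => Sum.inr (Sum.inl a)
  | Sum.inr (Sum.inl u) => Sum.inr (Sum.inr (Sum.inl u))
  | Sum.inr (Sum.inr (Sum.inl b)) => Sum.inl b
  | Sum.inr (Sum.inr (Sum.inr c)) => Sum.inr (Sum.inr (Sum.inr c))

/-- Splitting rows `Q, M, L` as row `M` together with rows `Q, L`. -/
def splitInM : Fin q ⊕ (Fin m ⊕ Fin l) → Fin m ⊕ (Fin q ⊕ Fin l)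
  | Sum.inl a => Sum.inr (Sum.inl a)
  | Sum.inr (Sum.inl u) => Sum.inl u
  | Sum.inr (Sum.inr b) => Sum.inr (Sum.inr b)

/-- Splitting rows `M, L, K` as row `L` together with rows `M, K`. -/
def splitInL : Fin m ⊕ (Fin l ⊕ Fin k) → Fin l ⊕ (Fin m ⊕ Fin k)
  | Sum.inl u => Sum.inr (Sum.inl u)
  | Sum.inr (Sum.inl b) => Sum.inl b
  | Sum.inr (Sum.inr c) => Sum.inr (Sum.inr c)

end Inst

end SPAssoc
namespace SPAssoc

section Sides

variable {k l m q : ℕ}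
variable {π₁ : Setoid (Fin (l + k))} {π₂ : Setoid (Fin (m + l))} {π₃ : Setoid (Fin (q + m))}

/-! #### Matching of projections with `toUpper`/`toLower` -/

theorem toQM_jQML (x : Fin q ⊕ (Fin m ⊕ Fin l)) :
    toQM (jQML (k := k) x) = toUpper q m l x := by rcases x with a | (u | b) <;> rfl

theorem toML_jQML (x : Fin q ⊕ (Fin m ⊕ Fin l)) :
    toML (jQML (k := k) x) = toLower q m l x := by rcases x with a | (u | b) <;> rfl

theorem toML_jMLK (x : Fin m ⊕ (Fin l ⊕ Fin k)) :
    toML (jMLK (q := q) x) = toUpper m l k x := by rcases x with u | (b | c) <;> rfl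

theorem toLK_jMLK (x : Fin m ⊕ (Fin l ⊕ Fin k)) :
    toLK (jMLK (q := q) x) = toLower m l k x := by rcases x with u | (b | c) <;> rfl

theorem toLK_iQLK (x : Fin q ⊕ (Fin l ⊕ Fin k)) :
    toLK (iQLK (m := m) x) = toLower q l k x := by rcases x with a | (b | c) <;> rfl

theorem toQM_iQMK (x : Fin q ⊕ (Fin m ⊕ Fin k)) :
    toQM (iQMK (l := l) x) = toUpper q m k x := by rcases x with a | (u | c) <;> rfl

/-! #### Generator maps into the four-row relation -/

theorem hgen_in2 : ∀ x y, glue q m l π₃ π₂ x y → bigR π₁ π₂ π₃ (jQML x) (jQML y) := by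
  rintro x y (⟨a, b, ha, hb, hr⟩ | ⟨a, b, ha, hb, hr⟩)
  · exact Or.inl ⟨a, b, (toQM_jQML x).trans ha, (toQM_jQML y).trans hb, hr⟩
  · exact Or.inr (Or.inl ⟨a, b, (toML_jQML x).trans ha, (toML_jQML y).trans hb, hr⟩)

theorem hgen_in1 : ∀ x y, glue m l k π₂ π₁ x y → bigR π₁ π₂ π₃ (jMLK x) (jMLK y) := by
  rintro x y (⟨a, b, ha, hb, hr⟩ | ⟨a, b, ha, hb, hr⟩)
  · exact Or.inr (Or.inl ⟨a, b, (toML_jMLK x).trans ha, (toML_jMLK y).trans hb, hr⟩)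
  · exact Or.inr (Or.inr ⟨a, b, (toLK_jMLK x).trans ha, (toLK_jMLK y).trans hb, hr⟩)

/-- Fold rows `Q, L` into the vertex set `[q+l]`. -/
def qlFin : Fin q ⊕ Fin l → Fin (q + l) := Sum.elim (Fin.castAdd l) (Fin.natAdd q)

/-- Fold rows `M, K` into the vertex set `[m+k]`. -/
def mkFin : Fin m ⊕ Fin k → Fin (m + k) := Sum.elim (Fin.castAdd k) (Fin.natAdd m)

theorem embMK_qlFin (p : Fin q ⊕ Fin l) : embMK q m l (qlFin p) = qlIn p := by
  rcases p with a | b <;> simp [qlFin, embMK, qlIn]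

theorem embMK_mkFin (p : Fin m ⊕ Fin k) : embMK m l k (mkFin p) = mkIn p := by
  rcases p with u | c <;> simp [mkFin, embMK, mkIn]

theorem toUpper_qlOut (p : Fin q ⊕ Fin l) :
    toUpper q l k (qlOut p) = some (qlFin p) := by rcases p with a | b <;> rfl

theorem toLower_mkOut (p : Fin m ⊕ Fin k) :
    toLower q m k (mkOut p) = some (mkFin p) := by rcases p with u | c <;> rfl

theorem hbridge2 : ∀ p p' : Fin q ⊕ Fin l,
    Relation.EqvGen (glue q m l π₃ π₂) (qlIn p) (qlIn p') →
    glue q l k (compSetoid q m l π₃ π₂) π₁ (qlOut p) (qlOut p') := by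
  intro p p' h
  refine Or.inl ⟨qlFin p, qlFin p', toUpper_qlOut p, toUpper_qlOut p', ?_⟩
  show Relation.EqvGen (glue q m l π₃ π₂) (embMK q m l (qlFin p)) (embMK q m l (qlFin p'))
  rwa [embMK_qlFin, embMK_qlFin]

theorem hbridge1 : ∀ p p' : Fin m ⊕ Fin k,
    Relation.EqvGen (glue m l k π₂ π₁) (mkIn p) (mkIn p') →
    glue q m k π₃ (compSetoid m l k π₂ π₁) (mkOut p) (mkOut p') := by
  intro p p' h
  refine Or.inr ⟨mkFin p, mkFin p', toLower_mkOut p, toLower_mkOut p', ?_⟩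
  show Relation.EqvGen (glue m l k π₂ π₁) (embMK m l k (mkFin p)) (embMK m l k (mkFin p'))
  rwa [embMK_mkFin, embMK_mkFin]

theorem jQML_embMK {x : Fin q ⊕ (Fin l ⊕ Fin k)} {a : Fin (q + l)}
    (ha : toUpper q l k x = some a) : jQML (k := k) (embMK q m l a) = iQLK (m := m) x := by
  rcases x with a₀ | (b₀ | c₀)
  · obtain rfl : Fin.castAdd l a₀ = a := Option.some.inj ha
    simp [embMK, jQML, iQLK]
  · obtain rfl : Fin.natAdd q b₀ = a := Option.some.inj ha
    simp [embMK, jQML, iQLK]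
  · exact absurd ha (by simp [toUpper])

theorem jMLK_embMK {x : Fin q ⊕ (Fin m ⊕ Fin k)} {a : Fin (m + k)}
    (ha : toLower q m k x = some a) : jMLK (q := q) (embMK m l k a) = iQMK (l := l) x := by
  rcases x with a₀ | (u₀ | c₀)
  · exact absurd ha (by simp [toLower])
  · obtain rfl : Fin.castAdd k u₀ = a := Option.some.inj ha
    simp [embMK, jMLK, iQMK]
  · obtain rfl : Fin.natAdd m c₀ = a := Option.some.inj ha
    simp [embMK, jMLK, iQMK]

theorem hgen_out2 : ∀ x y, glue q l k (compSetoid q m l π₃ π₂) π₁ x y →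
    Relation.EqvGen (bigR π₁ π₂ π₃) (iQLK x) (iQLK y) := by
  rintro x y (⟨a, b, ha, hb, hr⟩ | ⟨a, b, ha, hb, hr⟩)
  · have h2 : Relation.EqvGen (glue q m l π₃ π₂) (embMK q m l a) (embMK q m l b) := hr
    have h3 := eqvGen_map (jQML (k := k))
      (fun x y h => Relation.EqvGen.rel _ _ (hgen_in2 (π₁ := π₁) x y h)) h2
    rwa [jQML_embMK ha, jQML_embMK hb] at h3
  · exact Relation.EqvGen.rel _ _
      (Or.inr (Or.inr ⟨a, b, (toLK_iQLK x).trans ha, (toLK_iQLK y).trans hb, hr⟩))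

theorem hgen_out1 : ∀ x y, glue q m k π₃ (compSetoid m l k π₂ π₁) x y →
    Relation.EqvGen (bigR π₁ π₂ π₃) (iQMK x) (iQMK y) := by
  rintro x y (⟨a, b, ha, hb, hr⟩ | ⟨a, b, ha, hb, hr⟩)
  · exact Relation.EqvGen.rel _ _
      (Or.inl ⟨a, b, (toQM_iQMK x).trans ha, (toQM_iQMK y).trans hb, hr⟩)
  · have h2 : Relation.EqvGen (glue m l k π₂ π₁) (embMK m l k a) (embMK m l k b) := hr
    have h3 := eqvGen_map (jMLK (q := q))
      (fun x y h => Relation.EqvGen.rel _ _ (hgen_in1 (π₃ := π₃) x y h)) h2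
    rwa [jMLK_embMK ha, jMLK_embMK hb] at h3

end Sides

end SPAssoc
namespace SPAssoc

section Phis

variable {k l m q : ℕ}
variable {π₁ : Setoid (Fin (l + k))} {π₂ : Setoid (Fin (m + l))} {π₃ : Setoid (Fin (q + m))}

theorem hsplitM : ∀ w, Sum.elim (fun u : Fin m => jQML (k := k) (Sum.inr (Sum.inl u)))
    (iQLK (m := m)) (splitM (q := q) (l := l) w) = w := by
  rintro (a | (u | (b | c))) <;> rfl

theorem hsplitM_mu : ∀ u : Fin m,
    splitM (jQML (k := k) (q := q) (l := l) (Sum.inr (Sum.inl u))) = Sum.inl u :=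
  fun _ => rfl

theorem hsplitM_out : ∀ x, splitM (iQLK (m := m) (q := q) (l := l) (k := k) x) = Sum.inr x := by
  rintro (a | (b | c)) <;> rfl

theorem hsplitInM_mid : ∀ u : Fin m,
    splitInM (q := q) (l := l) (Sum.inr (Sum.inl u)) = Sum.inl u := fun _ => rfl

theorem hsplitInM_p : ∀ p, splitInM (q := q) (m := m) (l := l) (qlIn p) = Sum.inr p := by
  rintro (a | b) <;> rfl

theorem hsplitL : ∀ w, Sum.elim (fun b : Fin l => jMLK (q := q) (Sum.inr (Sum.inl b)))
    (iQMK (l := l)) (splitL (m := m) (k := k) w) = w := by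
  rintro (a | (u | (b | c))) <;> rfl

theorem hsplitL_mu : ∀ b : Fin l,
    splitL (jMLK (q := q) (m := m) (k := k) (Sum.inr (Sum.inl b))) = Sum.inl b :=
  fun _ => rfl

theorem hsplitL_out : ∀ x, splitL (iQMK (l := l) (q := q) (m := m) (k := k) x) = Sum.inr x := by
  rintro (a | (u | c)) <;> rfl

theorem hsplitInL_mid : ∀ b : Fin l,
    splitInL (m := m) (k := k) (Sum.inr (Sum.inl b)) = Sum.inl b := fun _ => rfl

theorem hsplitInL_p : ∀ p, splitInL (m := m) (l := l) (k := k) (mkIn p) = Sum.inr p := by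
  rintro (u | c) <;> rfl

theorem jQML_inj : Function.Injective (jQML (q := q) (m := m) (l := l) (k := k)) := by
  rintro (a | (u | b)) (a' | (u' | b')) h <;> simp [jQML] at h <;> simp [h]

theorem iQLK_inj : Function.Injective (iQLK (q := q) (m := m) (l := l) (k := k)) := by
  rintro (a | (b | c)) (a' | (b' | c')) h <;> simp [iQLK] at h <;> simp [h]

theorem jMLK_inj : Function.Injective (jMLK (q := q) (m := m) (l := l) (k := k)) := by
  rintro (u | (b | c)) (u' | (b' | c')) h <;> simp [jMLK] at h <;> simp [h]

theorem iQMK_inj : Function.Injective (iQMK (q := q) (m := m) (l := l) (k := k)) := by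
  rintro (a | (u | c)) (a' | (u' | c')) h <;> simp [iQMK] at h <;> simp [h]

theorem hRW_phi2 : ∀ w w', bigR π₁ π₂ π₃ w w' →
    Phi (glue q m l π₃ π₂) (glue q l k (compSetoid q m l π₃ π₂) π₁)
      (fun u => Sum.inr (Sum.inl u)) qlIn qlOut (splitM w) (splitM w') := by
  rintro w w' (⟨a, b, ha, hb, hr⟩ | ⟨a, b, ha, hb, hr⟩ | ⟨a, b, ha, hb, hr⟩) <;>
    rcases w with a₀ | (u₀ | (b₀ | c₀)) <;> rcases w' with a₁ | (u₁ | (b₁ | c₁)) <;>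
    simp only [toQM, toML, toLK, Option.some.injEq, reduceCtorEq] at ha hb <;>
    subst ha <;> subst hb
  · exact tout_of_ein hbridge2 (Sum.inl a₀) (Sum.inl a₁)
      (Relation.EqvGen.rel _ _ (Or.inl ⟨_, _, rfl, rfl, hr⟩))
  · exact ⟨Sum.inl a₀, Relation.EqvGen.refl _,
      Relation.EqvGen.rel _ _ (Or.inl ⟨_, _, rfl, rfl, hr⟩)⟩
  · exact ⟨Sum.inl a₁, Relation.EqvGen.rel _ _ (Or.inl ⟨_, _, rfl, rfl, hr⟩),
      Relation.EqvGen.refl _⟩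
  · exact Or.inl (Relation.EqvGen.rel _ _ (Or.inl ⟨_, _, rfl, rfl, hr⟩))
  · exact Or.inl (Relation.EqvGen.rel _ _ (Or.inr ⟨_, _, rfl, rfl, hr⟩))
  · exact ⟨Sum.inr b₁, Relation.EqvGen.rel _ _ (Or.inr ⟨_, _, rfl, rfl, hr⟩),
      Relation.EqvGen.refl _⟩
  · exact ⟨Sum.inr b₀, Relation.EqvGen.refl _,
      Relation.EqvGen.rel _ _ (Or.inr ⟨_, _, rfl, rfl, hr⟩)⟩
  · exact tout_of_ein hbridge2 (Sum.inr b₀) (Sum.inr b₁)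
      (Relation.EqvGen.rel _ _ (Or.inr ⟨_, _, rfl, rfl, hr⟩))
  · exact Relation.EqvGen.rel _ _ (Or.inr ⟨_, _, rfl, rfl, hr⟩)
  · exact Relation.EqvGen.rel _ _ (Or.inr ⟨_, _, rfl, rfl, hr⟩)
  · exact Relation.EqvGen.rel _ _ (Or.inr ⟨_, _, rfl, rfl, hr⟩)
  · exact Relation.EqvGen.rel _ _ (Or.inr ⟨_, _, rfl, rfl, hr⟩)

theorem hRW_phi1 : ∀ w w', bigR π₁ π₂ π₃ w w' →
    Phi (glue m l k π₂ π₁) (glue q m k π₃ (compSetoid m l k π₂ π₁))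
      (fun b => Sum.inr (Sum.inl b)) mkIn mkOut (splitL w) (splitL w') := by
  rintro w w' (⟨a, b, ha, hb, hr⟩ | ⟨a, b, ha, hb, hr⟩ | ⟨a, b, ha, hb, hr⟩) <;>
    rcases w with a₀ | (u₀ | (b₀ | c₀)) <;> rcases w' with a₁ | (u₁ | (b₁ | c₁)) <;>
    simp only [toQM, toML, toLK, Option.some.injEq, reduceCtorEq] at ha hb <;>
    subst ha <;> subst hb
  · exact Relation.EqvGen.rel _ _ (Or.inl ⟨_, _, rfl, rfl, hr⟩)
  · exact Relation.EqvGen.rel _ _ (Or.inl ⟨_, _, rfl, rfl, hr⟩)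
  · exact Relation.EqvGen.rel _ _ (Or.inl ⟨_, _, rfl, rfl, hr⟩)
  · exact Relation.EqvGen.rel _ _ (Or.inl ⟨_, _, rfl, rfl, hr⟩)
  · exact tout_of_ein hbridge1 (Sum.inl u₀) (Sum.inl u₁)
      (Relation.EqvGen.rel _ _ (Or.inl ⟨_, _, rfl, rfl, hr⟩))
  · exact ⟨Sum.inl u₀, Relation.EqvGen.refl _,
      Relation.EqvGen.rel _ _ (Or.inl ⟨_, _, rfl, rfl, hr⟩)⟩
  · exact ⟨Sum.inl u₁, Relation.EqvGen.rel _ _ (Or.inl ⟨_, _, rfl, rfl, hr⟩),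
      Relation.EqvGen.refl _⟩
  · exact Or.inl (Relation.EqvGen.rel _ _ (Or.inl ⟨_, _, rfl, rfl, hr⟩))
  · exact Or.inl (Relation.EqvGen.rel _ _ (Or.inr ⟨_, _, rfl, rfl, hr⟩))
  · exact ⟨Sum.inr c₁, Relation.EqvGen.rel _ _ (Or.inr ⟨_, _, rfl, rfl, hr⟩),
      Relation.EqvGen.refl _⟩
  · exact ⟨Sum.inr c₀, Relation.EqvGen.refl _,
      Relation.EqvGen.rel _ _ (Or.inr ⟨_, _, rfl, rfl, hr⟩)⟩
  · exact tout_of_ein hbridge1 (Sum.inr c₀) (Sum.inr c₁)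
      (Relation.EqvGen.rel _ _ (Or.inr ⟨_, _, rfl, rfl, hr⟩))

end Phis

end SPAssoc
namespace SPAssoc

section Final

variable {k l m q : ℕ}
variable {π₁ : Setoid (Fin (l + k))} {π₂ : Setoid (Fin (m + l))} {π₃ : Setoid (Fin (q + m))}

theorem emb_eq (a : Fin (q + k)) :
    iQLK (m := m) (embMK q l k a) = iQMK (l := l) (embMK q m k a) := by
  refine Fin.addCases (motive := fun a =>
    iQLK (m := m) (embMK q l k a) = iQMK (l := l) (embMK q m k a))
    (fun i => ?_) (fun i => ?_) a
  · simp [embMK, iQLK, iQMK]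
  · simp [embMK, iQLK, iQMK]

end Final

end SPAssoc


/-- composition of set partition diagrams is associative,
`(π₃∘π₂)∘π₁ = π₃∘(π₂∘π₁)` as set partitions of `[q+k]`, and the removed-component
counts satisfy `c(π₃,π₂) + c(π₃∘π₂,π₁) = c(π₂,π₁) + c(π₃,π₂∘π₁)`. -/
theorem compSetoid_assoc (k l m q : ℕ)
    (π₁ : Setoid (Fin (l + k))) (π₂ : Setoid (Fin (m + l))) (π₃ : Setoid (Fin (q + m))) :
    compSetoid q l k (compSetoid q m l π₃ π₂) π₁ =
      compSetoid q m k π₃ (compSetoid m l k π₂ π₁) ∧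
    removedCount q m l π₃ π₂ + removedCount q l k (compSetoid q m l π₃ π₂) π₁ =
      removedCount m l k π₂ π₁ + removedCount q m k π₃ (compSetoid m l k π₂ π₁)   := by
  constructor
  · apply Setoid.ext
    intro a b
    have h2 := SPAssoc.eqvGen_iout_iff (x := embMK q l k a) (y := embMK q l k b)
      (SPAssoc.hgen_out2 (π₁ := π₁) (π₂ := π₂) (π₃ := π₃)) SPAssoc.hbridge2
      SPAssoc.hRW_phi2 SPAssoc.hsplitM_out
    have h1 := SPAssoc.eqvGen_iout_iff (x := embMK q m k a) (y := embMK q m k b)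
      (SPAssoc.hgen_out1 (π₁ := π₁) (π₂ := π₂) (π₃ := π₃)) SPAssoc.hbridge1
      SPAssoc.hRW_phi1 SPAssoc.hsplitL_out
    show Relation.EqvGen (glue q l k (compSetoid q m l π₃ π₂) π₁)
        (embMK q l k a) (embMK q l k b) ↔
      Relation.EqvGen (glue q m k π₃ (compSetoid m l k π₂ π₁))
        (embMK q m k a) (embMK q m k b)
    rw [← h2, ← h1, SPAssoc.emb_eq a, SPAssoc.emb_eq b]
  · have hc2 := SPAssoc.card_split
      (nu := fun b : Fin l => (Sum.inr (Sum.inl b) : Fin q ⊕ (Fin l ⊕ Fin k)))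
      (SPAssoc.hgen_in2 (π₁ := π₁) (π₂ := π₂) (π₃ := π₃)) SPAssoc.hgen_out2
      SPAssoc.hbridge2 SPAssoc.hRW_phi2 SPAssoc.hsplitM SPAssoc.hsplitM_mu
      SPAssoc.hsplitM_out SPAssoc.hsplitInM_mid SPAssoc.hsplitInM_p
      SPAssoc.jQML_inj SPAssoc.iQLK_inj
    have hc1 := SPAssoc.card_split
      (nu := fun u : Fin m => (Sum.inr (Sum.inl u) : Fin q ⊕ (Fin m ⊕ Fin k)))
      (SPAssoc.hgen_in1 (π₁ := π₁) (π₂ := π₂) (π₃ := π₃)) SPAssoc.hgen_out1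
      SPAssoc.hbridge1 SPAssoc.hRW_phi1 SPAssoc.hsplitL SPAssoc.hsplitL_mu
      SPAssoc.hsplitL_out SPAssoc.hsplitInL_mid SPAssoc.hsplitInL_p
      SPAssoc.jMLK_inj SPAssoc.iQMK_inj
    have hS : Nat.card {d : Quotient (Relation.EqvGen.setoid (SPAssoc.bigR π₁ π₂ π₃)) //
        ∀ w, Quotient.mk (Relation.EqvGen.setoid (SPAssoc.bigR π₁ π₂ π₃)) w = d →
          (∃ u : Fin m, w = SPAssoc.jQML (Sum.inr (Sum.inl u))) ∨
          (∃ v : Fin l, w = SPAssoc.iQLK (Sum.inr (Sum.inl v)))} =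
        Nat.card {d : Quotient (Relation.EqvGen.setoid (SPAssoc.bigR π₁ π₂ π₃)) //
        ∀ w, Quotient.mk (Relation.EqvGen.setoid (SPAssoc.bigR π₁ π₂ π₃)) w = d →
          (∃ b : Fin l, w = SPAssoc.jMLK (Sum.inr (Sum.inl b))) ∨
          (∃ u : Fin m, w = SPAssoc.iQMK (Sum.inr (Sum.inl u)))} := by
      apply Nat.card_congr
      exact Equiv.subtypeEquiv (Equiv.refl _)
        (fun d => ⟨fun h w hw => (h w hw).symm, fun h w hw => (h w hw).symm⟩)
    exact hc2.trans (hS.trans hc1.symm)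
end
end
end

section
/- Let n = 2m be even. For perfect matchings β₁ of [l+k] and β₂ of [p+q], under the canonical isomorphisms (ℝⁿ)^{⊗(k+q)} ≅ (ℝⁿ)^{⊗k} ⊗ (ℝⁿ)^{⊗q} and (ℝⁿ)^{⊗(l+p)} ≅ (ℝⁿ)^{⊗l} ⊗ (ℝⁿ)^{⊗p}, one has F_{β₁⊗β₂} = F_{β₁} ⊗ F_{β₂}, where β₁⊗β₂ is the perfect matching of [(l+p)+(k+q)] obtained by placing the two diagrams side by side. -/
open Classical
noncomputable section

/-- The Gram matrix `ε` of the standard symplectic form on `ℝ^{2m}`, in the basis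
ordered `1, 1′, …, m, m′`. -/
def eps (m : ℕ) : Matrix (Fin (2 * m)) (Fin (2 * m)) ℝ :=
  Matrix.of fun i j =>
    if i.val + 1 = j.val ∧ i.val % 2 = 0 then (1 : ℝ)
    else if j.val + 1 = i.val ∧ j.val % 2 = 0 then (-1 : ℝ) else 0

/-- The matrix `F_β : (ℝⁿ)^{⊗k} → (ℝⁿ)^{⊗l}` (`n = 2m`) associated to a perfect matching
`β` of `[l+k]` encoded by an involution `f`. -/
def Fmat (m l k : ℕ) (f : Fin (l + k) → Fin (l + k)) :
    Matrix (Fin l → Fin (2 * m)) (Fin k → Fin (2 * m)) ℝ :=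
  Matrix.of fun I J =>
    ∏ x ∈ Finset.univ.filter (fun x => x < f x),
      (if ((x : Fin (l + k)).val < l ↔ (f x).val < l)
        then eps m (Fin.append I J x) (Fin.append I J (f x))
        else (if Fin.append I J x = Fin.append I J (f x) then (1 : ℝ) else 0))

/-- The relabeling of the vertex set `[l+k]` of `β₁` into the side-by-side vertex set
`[(l+p)+(k+q)]`: `x ↦ x` for `x ≤ l` and `l+y ↦ (l+p)+y` for `y ∈ [k]`. -/
def embLeft (l k p q : ℕ) (x : Fin (l + k)) : Fin ((l + p) + (k + q)) :=
  Fin.addCases (motive := fun _ => Fin ((l + p) + (k + q)))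
    (fun a => Fin.castAdd (k + q) (Fin.castAdd p a))
    (fun b => Fin.natAdd (l + p) (Fin.castAdd q b)) x

/-- The relabeling of the vertex set `[p+q]` of `β₂` into the side-by-side vertex set
`[(l+p)+(k+q)]`: `x ↦ l+x` for `x ≤ p` and `p+y ↦ (l+p)+k+y` for `y ∈ [q]`. -/
def embRight (l k p q : ℕ) (x : Fin (p + q)) : Fin ((l + p) + (k + q)) :=
  Fin.addCases (motive := fun _ => Fin ((l + p) + (k + q)))
    (fun a => Fin.castAdd (k + q) (Fin.natAdd l a))
    (fun b => Fin.natAdd (l + p) (Fin.natAdd k b)) x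

lemma embLeft_val (l k p q : ℕ) (x : Fin (l + k)) :
    (embLeft l k p q x).val = if x.val < l then x.val else x.val + p := by
  unfold embLeft Fin.addCases
  by_cases h : (x : ℕ) < l <;>
    simp [h, Fin.castAdd, Fin.natAdd, Fin.castLT, Fin.subNat] <;> omega

lemma embRight_val (l k p q : ℕ) (x : Fin (p + q)) :
    (embRight l k p q x).val = if x.val < p then l + x.val else l + k + x.val := by
  unfold embRight Fin.addCases
  by_cases h : (x : ℕ) < p <;>
    simp [h, Fin.castAdd, Fin.natAdd, Fin.castLT, Fin.subNat] <;> omega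

lemma embLeft_lt_iff (l k p q : ℕ) (x y : Fin (l + k)) :
    embLeft l k p q x < embLeft l k p q y ↔ x < y := by
  rw [Fin.lt_def, Fin.lt_def, embLeft_val, embLeft_val]
  split_ifs <;> omega

lemma embRight_lt_iff (l k p q : ℕ) (x y : Fin (p + q)) :
    embRight l k p q x < embRight l k p q y ↔ x < y := by
  rw [Fin.lt_def, Fin.lt_def, embRight_val, embRight_val]
  split_ifs <;> omega

lemma embLeft_inj (l k p q : ℕ) {x y : Fin (l + k)}
    (h : embLeft l k p q x = embLeft l k p q y) : x = y := by
  have := congrArg Fin.val h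
  rw [embLeft_val, embLeft_val] at this
  apply Fin.ext
  split_ifs at this <;> omega

lemma embRight_inj (l k p q : ℕ) {x y : Fin (p + q)}
    (h : embRight l k p q x = embRight l k p q y) : x = y := by
  have := congrArg Fin.val h
  rw [embRight_val, embRight_val] at this
  apply Fin.ext
  split_ifs at this <;> omega

lemma embLeft_ne_embRight (l k p q : ℕ) (x : Fin (l + k)) (y : Fin (p + q)) :
    embLeft l k p q x ≠ embRight l k p q y := by
  intro h
  have := congrArg Fin.val h
  rw [embLeft_val, embRight_val] at this
  have hx := x.isLt
  have hy := y.isLt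
  split_ifs at this <;> omega

lemma embLeft_lt_lp (l k p q : ℕ) (x : Fin (l + k)) :
    (embLeft l k p q x).val < l + p ↔ x.val < l := by
  rw [embLeft_val]; split_ifs <;> omega

lemma embRight_lt_lp (l k p q : ℕ) (x : Fin (p + q)) :
    (embRight l k p q x).val < l + p ↔ x.val < p := by
  have := x.isLt
  rw [embRight_val]; split_ifs <;> omega

lemma emb_cover (l k p q : ℕ) (z : Fin ((l + p) + (k + q))) :
    (∃ x, embLeft l k p q x = z) ∨ (∃ x, embRight l k p q x = z) := by
  have hz := z.isLt
  by_cases h1 : z.val < l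
  · exact Or.inl ⟨⟨z.val, by omega⟩, Fin.ext (by rw [embLeft_val]; simp [h1])⟩
  by_cases h2 : z.val < l + p
  · refine Or.inr ⟨⟨z.val - l, by omega⟩, Fin.ext ?_⟩
    rw [embRight_val]; simp only []; split_ifs <;> omega
  by_cases h3 : z.val < l + p + k
  · refine Or.inl ⟨⟨z.val - p, by omega⟩, Fin.ext ?_⟩
    rw [embLeft_val]; simp only []; split_ifs <;> omega
  · refine Or.inr ⟨⟨z.val - l - k, by omega⟩, Fin.ext ?_⟩
    rw [embRight_val]; simp only []; split_ifs <;> omega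

lemma append4_left {m l k p q : ℕ}
    (I : Fin l → Fin (2 * m)) (X : Fin p → Fin (2 * m))
    (J : Fin k → Fin (2 * m)) (Y : Fin q → Fin (2 * m)) (x : Fin (l + k)) :
    Fin.append (Fin.append I X) (Fin.append J Y) (embLeft l k p q x)
      = Fin.append I J x := by
  cases x using Fin.addCases with
  | left a => simp [embLeft, Fin.append_left]
  | right b => simp [embLeft, Fin.append_left, Fin.append_right]

lemma append4_right {m l k p q : ℕ}
    (I : Fin l → Fin (2 * m)) (X : Fin p → Fin (2 * m))
    (J : Fin k → Fin (2 * m)) (Y : Fin q → Fin (2 * m)) (x : Fin (p + q)) :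
    Fin.append (Fin.append I X) (Fin.append J Y) (embRight l k p q x)
      = Fin.append X Y x := by
  cases x using Fin.addCases with
  | left a => simp [embRight, Fin.append_left, Fin.append_right]
  | right b => simp [embRight, Fin.append_right]

/-- for perfect matchings `β₁` of `[l+k]` and `β₂` of `[p+q]` (encoded by
fixed-point-free involutions `f₁`, `f₂`), and `F` the side-by-side matching `β₁ ⊗ β₂`
of `[(l+p)+(k+q)]` (characterized by commuting with the two relabelings), one has
`F_{β₁⊗β₂} = F_{β₁} ⊗ F_{β₂}` under the canonical identifications of tensor powers;
entrywise, `F_{β₁⊗β₂}((I,X),(J,Y)) = F_{β₁}(I,J) · F_{β₂}(X,Y)`. -/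
theorem Fmat_tensor (m l k p q : ℕ) (hm : 0 < m)
    (f₁ : Fin (l + k) → Fin (l + k)) (hf₁ : ∀ x, f₁ (f₁ x) = x) (hf₁' : ∀ x, f₁ x ≠ x)
    (f₂ : Fin (p + q) → Fin (p + q)) (hf₂ : ∀ x, f₂ (f₂ x) = x) (hf₂' : ∀ x, f₂ x ≠ x)
    (F : Fin ((l + p) + (k + q)) → Fin ((l + p) + (k + q)))
    (hF₁ : ∀ x, F (embLeft l k p q x) = embLeft l k p q (f₁ x))
    (hF₂ : ∀ x, F (embRight l k p q x) = embRight l k p q (f₂ x))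
    (I : Fin l → Fin (2 * m)) (X : Fin p → Fin (2 * m))
    (J : Fin k → Fin (2 * m)) (Y : Fin q → Fin (2 * m)) :
    Fmat m (l + p) (k + q) F (Fin.append I X) (Fin.append J Y) =
      Fmat m l k f₁ I J * Fmat m p q f₂ X Y := by
  unfold Fmat
  simp only [Matrix.of_apply]
  have hset : (Finset.univ.filter (fun z => z < F z)) =
      ((Finset.univ.filter (fun x => x < f₁ x)).image (embLeft l k p q)) ∪
      ((Finset.univ.filter (fun x => x < f₂ x)).image (embRight l k p q)) := by
    ext z
    simp only [Finset.mem_filter, Finset.mem_univ, true_and, Finset.mem_union,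
      Finset.mem_image]
    constructor
    · intro hz
      rcases emb_cover l k p q z with ⟨x, hx⟩ | ⟨x, hx⟩
      · left
        refine ⟨x, ?_, hx⟩
        rw [← embLeft_lt_iff l k p q x (f₁ x), ← hF₁, hx]
        exact hz
      · right
        refine ⟨x, ?_, hx⟩
        rw [← embRight_lt_iff l k p q x (f₂ x), ← hF₂, hx]
        exact hz
    · rintro (⟨x, hx, rfl⟩ | ⟨x, hx, rfl⟩)
      · rw [hF₁, embLeft_lt_iff]; exact hx
      · rw [hF₂, embRight_lt_iff]; exact hx
  rw [hset, Finset.prod_union, Finset.prod_image (fun x _ y _ h => embLeft_inj l k p q h),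
    Finset.prod_image (fun x _ y _ h => embRight_inj l k p q h)]
  · congr 1
    · refine Finset.prod_congr rfl fun x _ => ?_
      simp only [hF₁, append4_left, embLeft_lt_lp]
    · refine Finset.prod_congr rfl fun x _ => ?_
      simp only [hF₂, append4_right, embRight_lt_lp]
  · rw [Finset.disjoint_left]
    rintro z hz₁ hz₂
    simp only [Finset.mem_image] at hz₁ hz₂
    obtain ⟨x, _, hx⟩ := hz₁
    obtain ⟨y, _, hy⟩ := hz₂
    exact embLeft_ne_embRight l k p q x y (hx.trans hy.symm)
end
end
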